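/- Let a > 0 and θ ∈ ℝ, and let (u_n)_{n∈ℕ} ⊂ (0,1] and (φ_n)_{n∈ℕ} ⊂ ℝ be sequences with n·u_n → a and n·φ_n → θ as n → ∞. Then g(u_n, φ_n)/n → 2a/(a² + θ²) as n → ∞. -/

import Mathlib

open Filter

/-- `g(u,φ) = u(2-u)/(u² + 2(1-u)(1-cos φ))`. -/
noncomputable def gfun (u φ : ℝ) : ℝ :=
  u * (2 - u) / (u ^ 2 + 2 * (1 - u) * (1 - Real.cos φ))

lemma abs_sin_sub_le_cube {x : ℝ} (hx : |x| ≤ 1) : |Real.sin x - x| ≤ |x| ^ 3 / 4 := by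
  rcases lt_trichotomy x 0 with h | h | h
  · have h1 : 0 < -x := by linarith
    have h2 : -x ≤ 1 := by rw [abs_of_neg h] at hx; linarith
    have := Real.sin_gt_sub_cube h1
    have hlt := Real.sin_lt h1
    rw [Real.sin_neg] at this hlt
    rw [abs_of_neg h, abs_of_pos (by linarith : 0 < Real.sin x - x)]
    nlinarith
  · simp [h]
  · have h2 : x ≤ 1 := by rwa [abs_of_pos h] at hx
    have := Real.sin_gt_sub_cube h
    have hlt := Real.sin_lt h
    rw [abs_of_pos h, abs_of_nonpos (by linarith : Real.sin x - x ≤ 0)]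
    nlinarith

/-- if `a > 0`, `u_n ∈ (0,1]`, `n u_n → a` and `n φ_n → θ`, then
`g(u_n, φ_n)/n → 2a/(a² + θ²)`. -/
theorem stmt_16 (a θ : ℝ) (ha : 0 < a) (u φ : ℕ → ℝ)
    (hu : ∀ n, u n ∈ Set.Ioc (0:ℝ) 1)
    (hua : Tendsto (fun n : ℕ => (n : ℝ) * u n) atTop (nhds a))
    (hφ : Tendsto (fun n : ℕ => (n : ℝ) * φ n) atTop (nhds θ)) :
    Tendsto (fun n : ℕ => gfun (u n) (φ n) / n) atTop (nhds (2 * a / (a ^ 2 + θ ^ 2))) := by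
  have hninv : Tendsto (fun n : ℕ => ((n : ℝ))⁻¹) atTop (nhds 0) :=
    tendsto_inv_atTop_zero.comp tendsto_natCast_atTop_atTop
  -- u n → 0
  have hu0 : Tendsto u atTop (nhds 0) := by
    have h := hua.mul hninv
    rw [mul_zero] at h
    refine h.congr' ?_
    filter_upwards [eventually_ge_atTop 1] with n hn
    have : (n : ℝ) ≠ 0 := Nat.cast_ne_zero.2 (by omega)
    field_simp
  -- φ n → 0
  have hφ0 : Tendsto φ atTop (nhds 0) := by
    have h := hφ.mul hninv
    rw [mul_zero] at h
    refine h.congr' ?_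
    filter_upwards [eventually_ge_atTop 1] with n hn
    have : (n : ℝ) ≠ 0 := Nat.cast_ne_zero.2 (by omega)
    field_simp
  -- n * sin (φ n / 2) → θ / 2
  have hsin : Tendsto (fun n : ℕ => (n : ℝ) * Real.sin (φ n / 2)) atTop (nhds (θ / 2)) := by
    have herr : Tendsto (fun n : ℕ => (n : ℝ) * (Real.sin (φ n / 2) - φ n / 2)) atTop (nhds 0) := by
      apply squeeze_zero_norm' (a := fun n : ℕ => |(n : ℝ) * φ n| ^ 3 / 4 / 8 * ((n : ℝ))⁻¹ * ((n : ℝ))⁻¹)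
      · have h1 : Tendsto (fun n : ℕ => φ n / 2) atTop (nhds 0) := by
          simpa using hφ0.div_const 2
        have h2 : ∀ᶠ n : ℕ in atTop, |φ n / 2| ≤ 1 := by
          have := h1.abs
          simp only [abs_zero] at this
          exact this.eventually_le_const one_pos
        filter_upwards [h2, eventually_ge_atTop 1] with n hn hn1
        have hne : (n : ℝ) ≠ 0 := Nat.cast_ne_zero.2 (by omega)
        have hpos : (0:ℝ) < n := by positivity
        have hb := abs_sin_sub_le_cube hn
        have : ‖(n : ℝ) * (Real.sin (φ n / 2) - φ n / 2)‖
            = (n : ℝ) * |Real.sin (φ n / 2) - φ n / 2| := by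
          rw [Real.norm_eq_abs, abs_mul, abs_of_pos hpos]
        rw [this]
        have key : (n : ℝ) * (|φ n / 2| ^ 3 / 4)
            = |(n : ℝ) * φ n| ^ 3 / 4 / 8 * ((n : ℝ))⁻¹ * ((n : ℝ))⁻¹ := by
          rw [abs_mul, abs_of_pos hpos, abs_div]
          have : |(2:ℝ)| = 2 := by norm_num
          rw [this]
          field_simp
          ring
        calc (n : ℝ) * |Real.sin (φ n / 2) - φ n / 2|
            ≤ (n : ℝ) * (|φ n / 2| ^ 3 / 4) := by
              exact mul_le_mul_of_nonneg_left hb hpos.le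
          _ = _ := key
      · have := ((((hφ.abs.pow 3).div_const 4).div_const 8).mul hninv).mul hninv
        simpa using this
    have hmain : Tendsto (fun n : ℕ => (n : ℝ) * φ n / 2) atTop (nhds (θ / 2)) :=
      hφ.div_const 2
    have := hmain.add herr
    rw [add_zero] at this
    refine this.congr fun n => ?_
    ring
  -- denominator and numerator
  have hden : Tendsto (fun n : ℕ => ((n : ℝ) * u n) ^ 2
      + 4 * (1 - u n) * ((n : ℝ) * Real.sin (φ n / 2)) ^ 2) atTop (nhds (a ^ 2 + θ ^ 2)) := by
    have h1 := hua.pow 2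
    have h2 : Tendsto (fun n : ℕ => 4 * (1 - u n)) atTop (nhds 4) := by
      have := (tendsto_const_nhds (x := (1:ℝ)) (f := atTop)).sub hu0
      rw [sub_zero] at this
      simpa using (tendsto_const_nhds (x := (4:ℝ)) (f := atTop)).mul this
    have h3 := h2.mul (hsin.pow 2)
    have h4 := h1.add h3
    have heq : a ^ 2 + 4 * (θ / 2) ^ 2 = a ^ 2 + θ ^ 2 := by ring
    rw [heq] at h4
    exact h4.congr fun n => by ring
  have hnum : Tendsto (fun n : ℕ => ((n : ℝ) * u n) * (2 - u n)) atTop (nhds (2 * a)) := by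
    have := hua.mul ((tendsto_const_nhds (x := (2:ℝ)) (f := atTop)).sub hu0)
    rw [sub_zero] at this
    simpa [mul_comm] using this
  have hdne : a ^ 2 + θ ^ 2 ≠ 0 := by positivity
  have hfin := hnum.div hden hdne
  refine hfin.congr' ?_
  filter_upwards [eventually_ge_atTop 1] with n hn
  have hne : (n : ℝ) ≠ 0 := Nat.cast_ne_zero.2 (by omega)
  obtain ⟨hu1, hu2⟩ := hu n
  have hcos : 1 - Real.cos (φ n) = 2 * Real.sin (φ n / 2) ^ 2 := by
    have := Real.sin_sq_eq_half_sub (φ n / 2)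
    rw [show 2 * (φ n / 2) = φ n by ring] at this
    linarith
  have hD : (0:ℝ) < u n ^ 2 + 2 * (1 - u n) * (1 - Real.cos (φ n)) := by
    have h1 : 0 ≤ 2 * (1 - u n) * (1 - Real.cos (φ n)) := by
      have := Real.cos_le_one (φ n)
      have := Real.neg_one_le_cos (φ n)
      nlinarith
    nlinarith
  simp only [Pi.div_apply]
  symm
  rw [gfun, hcos]
  rw [hcos] at hD
  have hnpos : (0:ℝ) < n := by positivity
  have hD2 : (0:ℝ) < ((n:ℝ) * u n) ^ 2 + 4 * (1 - u n) * ((n:ℝ) * Real.sin (φ n / 2)) ^ 2 := by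
    have h1 : (0:ℝ) < ((n:ℝ) * u n) ^ 2 := by positivity
    have h2 : (0:ℝ) ≤ 4 * (1 - u n) * ((n:ℝ) * Real.sin (φ n / 2)) ^ 2 := by
      have := sq_nonneg ((n:ℝ) * Real.sin (φ n / 2))
      nlinarith
    linarith
  rw [div_div, div_eq_div_iff (mul_pos hD hnpos).ne' hD2.ne']
  ring
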